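/- arXiv:1112.3837 — 2 statements merged into one kernel-verified Lean document; each statement's English description precedes it below -/
import Mathlib

section
/- The category HAsm of Herbrand assemblies over K₁ is locally cartesian closed: for every morphism f : B → A in HAsm, the base change (pullback) functor f* from the slice category HAsm/A to the slice category HAsm/B has a right adjoint Π_f. -/
open CategoryTheory Encodable Denumerable

namespace Herbrand

/-- Kleene application in Kleene's first pca `K₁`: `e · n`. -/
def kap (e n : ℕ) : Part ℕ := Nat.Partrec.Code.eval (ofNat Nat.Partrec.Code e) n

/-- `kapIn r n S` : `r · n` is defined and its value lies in `S`. -/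
def kapIn (r n : ℕ) (S : Set ℕ) : Prop := ∃ v ∈ kap r n, v ∈ S

/-- The list coded by a natural number (canonical bijection `ℕ ≃ List ℕ`). -/
def toL (n : ℕ) : List ℕ := ofNat (List ℕ) n

/-- The code of a list of natural numbers. -/
def ofL (l : List ℕ) : ℕ := encode l

@[simp] lemma toL_ofL (l : List ℕ) : toL (ofL l) = l := ofNat_encode l

/-- `!A` : the set of codes of lists all of whose entries lie in `A`. -/
def bang (A : Set ℕ) : Set ℕ := {n | ∀ x ∈ toL n, x ∈ A}

/-- `m ⪯ n` : every entry of the list coded by `m` is an entry of the list coded by `n`. -/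
def sle (m n : ℕ) : Prop := ∀ x ∈ toL m, x ∈ toL n

lemma sle_refl (m : ℕ) : sle m m := fun _ hx => hx

lemma sle_trans {m n k : ℕ} (h1 : sle m n) (h2 : sle n k) : sle m k :=
  fun x hx => h2 x (h1 x hx)

/-- `S` is upward closed in `!A`. -/
def UpwardClosedIn (A S : Set ℕ) : Prop :=
  ∀ m ∈ S, ∀ n ∈ bang A, sle m n → n ∈ S

/-- `↑_{!A} S` : the set of `n ∈ !A` with `m ⪯ n` for some `m ∈ S`. -/
def upClo (A S : Set ℕ) : Set ℕ := {n | n ∈ bang A ∧ ∃ m ∈ S, sle m n}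

lemma mem_bang_univ (n : ℕ) : n ∈ bang Set.univ := fun x _ => Set.mem_univ x

/-- From a partial recursive function we get a `K₁`-code for it. -/
theorem exists_kap_eq {f : ℕ →. ℕ} (hf : Nat.Partrec f) : ∃ e, ∀ n, kap e n = f n := by
  obtain ⟨c, hc⟩ := Nat.Partrec.Code.exists_code.mp hf
  exact ⟨encode c, fun n => by simp [kap, hc]⟩


/-- A Herbrand assembly over `K₁`. -/
structure HAsmObj where
  carrier : Type
  real : Set ℕ
  rz : carrier → Set ℕ
  rz_sub : ∀ a, rz a ⊆ bang real
  rz_ne : ∀ a, (rz a).Nonempty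
  rz_up : ∀ a, UpwardClosedIn real (rz a)

/-- `r ∈ ℕ` tracks the function `f` between the underlying sets of two Herbrand assemblies. -/
def Tracks (B A : HAsmObj) (f : B.carrier → A.carrier) (r : ℕ) : Prop :=
  (∀ m ∈ bang B.real, kapIn r m (bang A.real)) ∧
  ∀ b : B.carrier, ∀ m ∈ B.rz b, kapIn r m (A.rz (f b))

/-- A morphism of Herbrand assemblies: a tracked function. -/
structure HHom (B A : HAsmObj) where
  toFun : B.carrier → A.carrier
  tracked : ∃ r, Tracks B A toFun r

theorem HHom.ext' {B A : HAsmObj} {f g : HHom B A} (h : f.toFun = g.toFun) : f = g := by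
  cases f; cases g; simpa using h

theorem tracks_id_fun (B A : HAsmObj) (f : B.carrier → A.carrier)
    (h1 : ∀ m ∈ bang B.real, m ∈ bang A.real)
    (h2 : ∀ b : B.carrier, ∀ m ∈ B.rz b, m ∈ A.rz (f b)) : ∃ r, Tracks B A f r := by
  obtain ⟨e, he⟩ := exists_kap_eq (Nat.Partrec.of_primrec Nat.Primrec.id)
  exact ⟨e, fun m hm => ⟨m, by simp [he], h1 m hm⟩,
    fun b m hm => ⟨m, by simp [he], h2 b m hm⟩⟩

theorem tracked_id (A : HAsmObj) : ∃ r, Tracks A A id r :=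
  tracks_id_fun A A id (fun _ h => h) (fun _ _ h => h)

theorem tracked_comp {C B A : HAsmObj} {f : C.carrier → B.carrier} {g : B.carrier → A.carrier}
    (hf : ∃ r, Tracks C B f r) (hg : ∃ s, Tracks B A g s) : ∃ t, Tracks C A (g ∘ f) t := by
  obtain ⟨r, hr1, hr2⟩ := hf
  obtain ⟨s, hs1, hs2⟩ := hg
  refine ⟨encode (Nat.Partrec.Code.comp (ofNat Nat.Partrec.Code s) (ofNat Nat.Partrec.Code r)),
    ?_, ?_⟩
  · intro m hm
    obtain ⟨v, hv, hv'⟩ := hr1 m hm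
    obtain ⟨w, hw, hw'⟩ := hs1 v hv'
    exact ⟨w, by simp only [kap, Nat.Partrec.Code.eval, ofNat_encode]; exact Part.mem_bind_iff.mpr ⟨v, hv, hw⟩, hw'⟩
  · intro c m hm
    obtain ⟨v, hv, hv'⟩ := hr2 c m hm
    obtain ⟨w, hw, hw'⟩ := hs2 (f c) v hv'
    exact ⟨w, by simp only [kap, Nat.Partrec.Code.eval, ofNat_encode]; exact Part.mem_bind_iff.mpr ⟨v, hv, hw⟩, hw'⟩

/-- The category `HAsm` of Herbrand assemblies over `K₁`. -/
instance : Category HAsmObj where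
  Hom B A := HHom B A
  id A := ⟨id, tracked_id A⟩
  comp f g := ⟨g.toFun ∘ f.toFun, tracked_comp f.tracked g.tracked⟩
  id_comp f := HHom.ext' rfl
  comp_id f := HHom.ext' rfl
  assoc f g h := HHom.ext' rfl


/-- The Herbrand assembly `∇X = (X, ℕ, x ↦ !ℕ)`. -/
def nablaObj (X : Type) : HAsmObj where
  carrier := X
  real := Set.univ
  rz _ := bang Set.univ
  rz_sub _ := fun _ h => h
  rz_ne _ := ⟨0, mem_bang_univ 0⟩
  rz_up _ := fun _ _ n hn _ => hn

/-- The functor `∇ : Set → HAsm`. -/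
def Nabla : Type ⥤ HAsmObj where
  obj := nablaObj
  map f := ⟨f, tracks_id_fun _ _ f (fun _ h => h) (fun _ _ h => h)⟩
  map_id _ := HHom.ext' rfl
  map_comp _ _ := HHom.ext' rfl

/-- The underlying-set functor `Γ : HAsm → Set`. -/
def Gamma : HAsmObj ⥤ Type where
  obj A := A.carrier
  map f := TypeCat.ofHom f.toFun

/-- The realizability structure of the natural numbers object: `ν n = ↑_{!ℕ} {⟨n⟩}`. -/
def nuN (n : ℕ) : Set ℕ := upClo Set.univ {ofL [n]}

/-- The natural numbers object `N = (ℕ, ℕ, ν)` of `HAsm`. -/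
def NObj : HAsmObj where
  carrier := ℕ
  real := Set.univ
  rz := nuN
  rz_sub _ := fun _ hm => hm.1
  rz_ne n := ⟨ofL [n], mem_bang_univ _, ofL [n], rfl, sle_refl _⟩
  rz_up _ := fun m hm k hk hmk => ⟨hk, hm.2.choose, hm.2.choose_spec.1,
    sle_trans hm.2.choose_spec.2 hmk⟩

/-- The terminal object `1 = ({*}, ℕ, * ↦ !ℕ)` of `HAsm`. -/
def oneObj : HAsmObj := nablaObj PUnit

/-- The zero morphism `0 : 1 ⟶ N`. -/
def zeroH : oneObj ⟶ NObj := by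
  refine ⟨fun _ => (0 : ℕ), ?_⟩
  obtain ⟨e, he⟩ := exists_kap_eq (Nat.Partrec.of_primrec (Nat.Primrec.const (ofL [0])))
  exact ⟨e, fun m _ => ⟨ofL [0], by simp [he], mem_bang_univ _⟩,
    fun b m _ => ⟨ofL [0], by simp [he], mem_bang_univ _, ofL [0], rfl, sle_refl _⟩⟩

/-- The successor morphism `s : N ⟶ N`. -/
def succH : NObj ⟶ NObj := by
  refine ⟨(Nat.succ : ℕ → ℕ), ?_⟩
  have hp : Primrec (fun m : ℕ => ofL ((toL m).map Nat.succ)) :=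
    Primrec.encode.comp ((Primrec.ofNat (List ℕ)).list_map
      ((Primrec.succ.comp Primrec.snd).to₂))
  obtain ⟨e, he⟩ := exists_kap_eq (Nat.Partrec.of_primrec (Primrec.nat_iff.mp hp))
  refine ⟨e, fun m _ => ⟨ofL ((toL m).map Nat.succ), by simp [he], mem_bang_univ _⟩, ?_⟩
  rintro (n : ℕ) m hm
  refine ⟨ofL ((toL m).map Nat.succ), by simp [he], mem_bang_univ _, ofL [n + 1], rfl, ?_⟩
  intro x hx
  have hn : n ∈ toL m := hm.2.choose_spec.2 n (by
    have : hm.2.choose = ofL [n] := hm.2.choose_spec.1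
    rw [this]; simp)
  have hx' : x = n + 1 := by simpa using hx
  subst hx'
  simp only [toL_ofL, List.mem_map]
  exact ⟨n, hn, rfl⟩


/-! ### Auxiliary development for local cartesian closure -/

section LCC

open Nat.Partrec (Code)
open Nat.Partrec.Code

@[simp] lemma ofL_toL (n : ℕ) : ofL (toL n) = n := Denumerable.encode_ofNat n

lemma partrec_kap (r : ℕ) : Partrec (kap r) :=
  Partrec.nat_iff.mpr (Nat.Partrec.Code.exists_code.mpr ⟨ofNat Code r, rfl⟩)

theorem exists_kap_eq' {f : ℕ →. ℕ} (hf : Partrec f) : ∃ e, ∀ n, kap e n = f n :=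
  exists_kap_eq (Partrec.nat_iff.mp hf)

/-- Tag as a "left" element. -/
def tagL (x : ℕ) : ℕ := 2 * x
/-- Tag as a "right" element. -/
def tagR (x : ℕ) : ℕ := 2 * x + 1

/-- Extract the left components of a merged list code. -/
def untagL (m : ℕ) : ℕ := ofL ((toL m).filterMap fun x => if x % 2 = 0 then some (x / 2) else none)
/-- Extract the right components of a merged list code. -/
def untagR (m : ℕ) : ℕ := ofL ((toL m).filterMap fun x => if x % 2 = 1 then some (x / 2) else none)

/-- Merge two list codes into one, tagging entries left/right. -/
def merge2 (u v : ℕ) : ℕ := ofL ((toL u).map tagL ++ (toL v).map tagR)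

lemma mem_toL_untagL {m x : ℕ} : x ∈ toL (untagL m) ↔ 2 * x ∈ toL m := by
  simp only [untagL, toL_ofL, List.mem_filterMap]
  constructor
  · rintro ⟨a, ha, hx⟩
    by_cases h : a % 2 = 0
    · simp only [if_pos h, Option.some.injEq] at hx
      have hax : a = 2 * x := by omega
      rwa [hax] at ha
    · simp [h] at hx
  · intro h
    refine ⟨2 * x, h, ?_⟩
    have h1 : 2 * x % 2 = 0 := by omega
    have h2 : 2 * x / 2 = x := by omega
    simp [h1, h2]

lemma mem_toL_untagR {m x : ℕ} : x ∈ toL (untagR m) ↔ 2 * x + 1 ∈ toL m := by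
  simp only [untagR, toL_ofL, List.mem_filterMap]
  constructor
  · rintro ⟨a, ha, hx⟩
    by_cases h : a % 2 = 1
    · simp only [if_pos h, Option.some.injEq] at hx
      have hax : a = 2 * x + 1 := by omega
      rwa [hax] at ha
    · simp [h] at hx
  · intro h
    refine ⟨2 * x + 1, h, ?_⟩
    have h1 : (2 * x + 1) % 2 = 1 := by omega
    have h2 : (2 * x + 1) / 2 = x := by omega
    simp [h1, h2]

lemma untagL_merge2 (u v : ℕ) : untagL (merge2 u v) = u := by
  have : ((toL u).map tagL ++ (toL v).map tagR).filterMap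
      (fun x => if x % 2 = 0 then some (x / 2) else none) = toL u := by
    rw [List.filterMap_append]
    have h1 : ((toL u).map tagL).filterMap
        (fun x => if x % 2 = 0 then some (x / 2) else none) = toL u := by
      rw [List.filterMap_map]
      have hfun : ((fun x => if x % 2 = 0 then some (x / 2) else none) ∘ tagL) = some := by
        funext x
        have h1 : tagL x % 2 = 0 := by simp only [tagL]; omega
        have h2 : tagL x / 2 = x := by simp only [tagL]; omega
        simp [Function.comp, h1, h2]
      rw [hfun]
      exact List.filterMap_some ..
    have h2 : ((toL v).map tagR).filterMap
        (fun x => if x % 2 = 0 then some (x / 2) else none) = [] := by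
      rw [List.filterMap_map]
      have hfun : ((fun x => if x % 2 = 0 then some (x / 2) else none) ∘ tagR)
          = fun _ => none := by
        funext x
        have h1 : tagR x % 2 = 1 := by simp only [tagR]; omega
        simp [Function.comp, h1]
      rw [hfun]
      simp
    rw [h1, h2, List.append_nil]
  rw [untagL, merge2, toL_ofL, this, ofL_toL]

lemma untagR_merge2 (u v : ℕ) : untagR (merge2 u v) = v := by
  have : ((toL u).map tagL ++ (toL v).map tagR).filterMap
      (fun x => if x % 2 = 1 then some (x / 2) else none) = toL v := by
    rw [List.filterMap_append]
    have h1 : ((toL u).map tagL).filterMap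
        (fun x => if x % 2 = 1 then some (x / 2) else none) = [] := by
      rw [List.filterMap_map]
      have hfun : ((fun x => if x % 2 = 1 then some (x / 2) else none) ∘ tagL)
          = fun _ => none := by
        funext x
        have h1 : tagL x % 2 = 0 := by simp only [tagL]; omega
        simp [Function.comp, h1]
      rw [hfun]
      simp
    have h2 : ((toL v).map tagR).filterMap
        (fun x => if x % 2 = 1 then some (x / 2) else none) = toL v := by
      rw [List.filterMap_map]
      have hfun : ((fun x => if x % 2 = 1 then some (x / 2) else none) ∘ tagR) = some := by
        funext x
        have h1 : tagR x % 2 = 1 := by simp only [tagR]; omega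
        have h2 : tagR x / 2 = x := by simp only [tagR]; omega
        simp [Function.comp, h1, h2]
      rw [hfun]
      exact List.filterMap_some ..
    rw [h1, h2, List.nil_append]
  rw [untagR, merge2, toL_ofL, this, ofL_toL]

/-- The tagged union of two sets of realizers. -/
def pairSet (S T : Set ℕ) : Set ℕ :=
  {n | (n % 2 = 0 ∧ n / 2 ∈ S) ∨ (n % 2 = 1 ∧ n / 2 ∈ T)}

lemma merge2_mem_bang {S T : Set ℕ} {u v : ℕ} (hu : u ∈ bang S) (hv : v ∈ bang T) :
    merge2 u v ∈ bang (pairSet S T) := by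
  intro x hx
  rw [merge2, toL_ofL] at hx
  rcases List.mem_append.mp hx with h | h
  · obtain ⟨a, ha, rfl⟩ := List.mem_map.mp h
    exact Or.inl ⟨by simp [tagL], by simpa [tagL, Nat.mul_div_cancel_left] using hu a ha⟩
  · obtain ⟨a, ha, rfl⟩ := List.mem_map.mp h
    refine Or.inr ⟨by simp only [tagR]; omega, ?_⟩
    have : tagR a / 2 = a := by simp only [tagR]; omega
    rw [this]; exact hv a ha

lemma untagL_mem_bang {S T : Set ℕ} {m : ℕ} (hm : m ∈ bang (pairSet S T)) :
    untagL m ∈ bang S := by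
  intro x hx
  have h2 := mem_toL_untagL.mp hx
  rcases hm _ h2 with ⟨_, h⟩ | ⟨h, _⟩
  · simpa [Nat.mul_div_cancel_left] using h
  · omega

lemma untagR_mem_bang {S T : Set ℕ} {m : ℕ} (hm : m ∈ bang (pairSet S T)) :
    untagR m ∈ bang T := by
  intro x hx
  have h2 := mem_toL_untagR.mp hx
  rcases hm _ h2 with ⟨h, _⟩ | ⟨_, h⟩
  · omega
  · have : (2 * x + 1) / 2 = x := by omega
    rwa [this] at h

lemma sle_untagL {m n : ℕ} (h : sle m n) : sle (untagL m) (untagL n) := fun x hx =>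
  mem_toL_untagL.mpr (h _ (mem_toL_untagL.mp hx))

lemma sle_untagR {m n : ℕ} (h : sle m n) : sle (untagR m) (untagR n) := fun x hx =>
  mem_toL_untagR.mpr (h _ (mem_toL_untagR.mp hx))

lemma primrec_toL : Primrec toL := Primrec.ofNat (List ℕ)
lemma primrec_ofL : Primrec ofL := Primrec.encode

lemma primrec_untagL : Primrec untagL := by
  refine primrec_ofL.comp (Primrec.listFilterMap primrec_toL ?_)
  refine Primrec.ite ?_ (Primrec.option_some.comp
    ((Primrec.nat_div.comp Primrec.snd (Primrec.const 2)))) (Primrec.const none)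
  exact PrimrecPred.comp (p := fun q : ℕ × ℕ => q.1 = q.2)
    (Primrec.eq) (Primrec.pair (Primrec.nat_mod.comp Primrec.snd (Primrec.const 2))
      (Primrec.const 0))

lemma primrec_untagR : Primrec untagR := by
  refine primrec_ofL.comp (Primrec.listFilterMap primrec_toL ?_)
  refine Primrec.ite ?_ (Primrec.option_some.comp
    ((Primrec.nat_div.comp Primrec.snd (Primrec.const 2)))) (Primrec.const none)
  exact PrimrecPred.comp (p := fun q : ℕ × ℕ => q.1 = q.2)
    (Primrec.eq) (Primrec.pair (Primrec.nat_mod.comp Primrec.snd (Primrec.const 2))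
      (Primrec.const 1))

lemma primrec_merge2 : Primrec₂ merge2 := by
  have h : Primrec (fun p : ℕ × ℕ => ofL ((toL p.1).map tagL ++ (toL p.2).map tagR)) := by
    apply primrec_ofL.comp
    refine Primrec.list_append.comp ?_ ?_
    · exact Primrec.list_map (primrec_toL.comp Primrec.fst)
        ((Primrec.nat_mul.comp (Primrec.const 2) Primrec.snd).to₂)
    · exact Primrec.list_map (primrec_toL.comp Primrec.snd)
        ((Primrec.succ.comp (Primrec.nat_mul.comp (Primrec.const 2) Primrec.snd)).to₂)
  exact h.to₂

/-- Composition of codes on numerals. -/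
def compC (r e : ℕ) : ℕ := encode (Code.comp (ofNat Code r) (ofNat Code e))

lemma kap_compC (r e k : ℕ) : kap (compC r e) k = (kap e k).bind (kap r) := by
  simp only [kap, compC, Denumerable.ofNat_encode]
  rfl

lemma primrec_compC (r : ℕ) : Primrec (compC r) :=
  Primrec.encode.comp (primrec₂_comp.comp (Primrec.const (ofNat Code r)) (Primrec.ofNat Code))

/-- All codes in the list coded by `l` halt on `k` within `t` steps. -/
def allHalt (l k t : ℕ) : Bool :=
  (toL l).foldr (fun e b => (evaln t (ofNat Code e) k).isSome && b) true

lemma allHalt_iff {l k t : ℕ} :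
    allHalt l k t = true ↔ ∀ e ∈ toL l, (evaln t (ofNat Code e) k).isSome := by
  unfold allHalt
  induction toL l with
  | nil => simp
  | cons a L ih => simp [ih]

/-- The concatenation of the outputs of all codes in the list coded by `l` on `k`
within `t` steps. -/
def joinOut (l k t : ℕ) : ℕ :=
  ofL (((toL l).map fun e => toL ((evaln t (ofNat Code e) k).getD 0)).flatten)

/-- Parallel evaluation: evaluate all codes in a coded list on an input, concatenate
the resulting lists. -/
def evalAll : ℕ →. ℕ := fun n =>
  (Nat.rfind fun t => Part.some (allHalt n.unpair.1 n.unpair.2 t)).map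
    (joinOut n.unpair.1 n.unpair.2)

lemma partrec_evalAll : Partrec evalAll := by
  have hall : Computable₂ fun (n t : ℕ) => allHalt n.unpair.1 n.unpair.2 t := by
    have hf : Primrec fun a : ℕ × ℕ => toL a.1.unpair.1 :=
      primrec_toL.comp (Primrec.fst.comp (Primrec.unpair.comp Primrec.fst))
    have hh : Primrec₂ fun (a : ℕ × ℕ) (p : ℕ × Bool) =>
        (evaln a.2 (ofNat Code p.1) a.1.unpair.2).isSome && p.2 := by
      have h1 : Primrec fun q : (ℕ × ℕ) × ℕ × Bool =>
          ((q.1.2, ofNat Code q.2.1), (Nat.unpair q.1.1).2) :=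
        Primrec.pair
          (Primrec.pair (Primrec.snd.comp Primrec.fst)
            ((Primrec.ofNat Code).comp (Primrec.fst.comp Primrec.snd)))
          (Primrec.snd.comp (Primrec.unpair.comp (Primrec.fst.comp Primrec.fst)))
      have he : Primrec fun q : (ℕ × ℕ) × ℕ × Bool =>
          (evaln q.1.2 (ofNat Code q.2.1) q.1.1.unpair.2).isSome :=
        Primrec.option_isSome.comp (primrec_evaln.comp h1)
      exact ((Primrec.dom_bool₂ (· && ·)).comp he
        (Primrec.snd.comp Primrec.snd)).to₂
    exact (Primrec.list_foldr hf (Primrec.const true) hh).to₂.to_comp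
  have hjoin : Computable₂ fun (n t : ℕ) => joinOut n.unpair.1 n.unpair.2 t := by
    have hf : Primrec fun a : ℕ × ℕ => toL a.1.unpair.1 :=
      primrec_toL.comp (Primrec.fst.comp (Primrec.unpair.comp Primrec.fst))
    have hg : Primrec₂ fun (a : ℕ × ℕ) (e : ℕ) =>
        toL ((evaln a.2 (ofNat Code e) a.1.unpair.2).getD 0) := by
      have h1 : Primrec fun q : (ℕ × ℕ) × ℕ =>
          ((q.1.2, ofNat Code q.2), (Nat.unpair q.1.1).2) :=
        Primrec.pair
          (Primrec.pair (Primrec.snd.comp Primrec.fst) ((Primrec.ofNat Code).comp Primrec.snd))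
          (Primrec.snd.comp (Primrec.unpair.comp (Primrec.fst.comp Primrec.fst)))
      have h2 : Primrec fun q : (ℕ × ℕ) × ℕ =>
          evaln q.1.2 (ofNat Code q.2) (Nat.unpair q.1.1).2 := primrec_evaln.comp h1
      exact (primrec_toL.comp (Primrec.option_getD.comp h2 (Primrec.const 0))).to₂
    exact (primrec_ofL.comp (Primrec.list_flatten.comp (Primrec.list_map hf hg))).to₂.to_comp
  exact (Partrec.rfind hall.partrec₂).map hjoin

lemma exists_uniform_bound {k : ℕ} : ∀ L : List ℕ, (∀ e ∈ L, (kap e k).Dom) →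
    ∃ t, ∀ e ∈ L, (evaln t (ofNat Code e) k).isSome := by
  intro L
  induction L with
  | nil => exact fun _ => ⟨0, by simp⟩
  | cons a L ih =>
    intro hh
    obtain ⟨t1, ht1⟩ := ih fun e he => hh e (List.mem_cons_of_mem _ he)
    obtain ⟨t2, ht2⟩ := evaln_complete.mp (Part.get_mem (hh a List.mem_cons_self))
    refine ⟨max t1 t2, fun e he => ?_⟩
    rcases List.mem_cons.mp he with rfl | he'
    · have := evaln_mono (le_max_right t1 t2) ht2
      simp [Option.isSome_iff_exists]
      exact ⟨_, this⟩
    · obtain ⟨v, hv⟩ := Option.isSome_iff_exists.mp (ht1 e he')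
      have : v ∈ evaln (max t1 t2) (ofNat Code e) k :=
        evaln_mono (le_max_left t1 t2) hv
      simp [Option.isSome_iff_exists]
      exact ⟨_, this⟩

lemma evalAll_spec {l k : ℕ} (h : ∀ e ∈ toL l, (kap e k).Dom) :
    ∃ w ∈ evalAll (Nat.pair l k),
      (∀ e ∈ toL l, ∀ v ∈ kap e k, sle v w) ∧
      (∀ x ∈ toL w, ∃ e ∈ toL l, ∃ v ∈ kap e k, x ∈ toL v) := by
  obtain ⟨t, ht⟩ := exists_uniform_bound (toL l) h
  have hdom : (Nat.rfind fun t => Part.some (allHalt l k t)).Dom := by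
    refine Nat.rfind_dom.mpr ?_
    exact ⟨t, by simpa [Part.some] using allHalt_iff.mpr ht, fun _ => trivial⟩
  set t₀ := (Nat.rfind fun t => Part.some (allHalt l k t)).get hdom with ht₀
  have ht₀mem : t₀ ∈ Nat.rfind fun t => Part.some (allHalt l k t) := Part.get_mem hdom
  have hall : allHalt l k t₀ = true := by
    have := Nat.rfind_spec ht₀mem
    simpa [Part.some] using this
  have hall' := allHalt_iff.mp hall
  refine ⟨joinOut l k t₀, ?_, ?_, ?_⟩
  · simp only [evalAll, Nat.unpair_pair]
    exact Part.mem_map _ ht₀mem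
  · intro e he v hv
    obtain ⟨v₀, hv₀⟩ := Option.isSome_iff_exists.mp (hall' e he)
    have hv₀' : v₀ ∈ kap e k := evaln_sound (by rw [hv₀]; rfl)
    have : v = v₀ := Part.mem_unique hv hv₀'
    subst this
    intro x hx
    simp only [joinOut, toL_ofL]
    rw [List.mem_flatten]
    exact ⟨toL ((evaln t₀ (ofNat Code e) k).getD 0), List.mem_map.mpr ⟨e, he, rfl⟩,
      by rw [hv₀]; exact hx⟩
  · intro x hx
    simp only [joinOut, toL_ofL, List.mem_flatten] at hx
    obtain ⟨piece, hpiece, hxp⟩ := hx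
    obtain ⟨e, he, rfl⟩ := List.mem_map.mp hpiece
    obtain ⟨v₀, hv₀⟩ := Option.isSome_iff_exists.mp (hall' e he)
    refine ⟨e, he, v₀, evaln_sound (by rw [hv₀]; rfl), ?_⟩
    rwa [hv₀] at hxp

/-- The pullback object of two morphisms of Herbrand assemblies into `A`. -/
def pbObj (X Y A : HAsmObj) (h : HHom X A) (g : HHom Y A) : HAsmObj where
  carrier := {p : X.carrier × Y.carrier // h.toFun p.1 = g.toFun p.2}
  real := pairSet X.real Y.real
  rz p := {m | m ∈ bang (pairSet X.real Y.real) ∧ untagL m ∈ X.rz p.1.1 ∧ untagR m ∈ Y.rz p.1.2}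
  rz_sub _ := fun _ hm => hm.1
  rz_ne p := by
    obtain ⟨u, hu⟩ := X.rz_ne p.1.1
    obtain ⟨v, hv⟩ := Y.rz_ne p.1.2
    exact ⟨merge2 u v, merge2_mem_bang (X.rz_sub _ hu) (Y.rz_sub _ hv),
      by rw [untagL_merge2]; exact hu, by rw [untagR_merge2]; exact hv⟩
  rz_up p := by
    rintro m ⟨_, hm2, hm3⟩ n hn hmn
    exact ⟨hn, X.rz_up _ _ hm2 _ (untagL_mem_bang hn) (sle_untagL hmn),
      Y.rz_up _ _ hm3 _ (untagR_mem_bang hn) (sle_untagR hmn)⟩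

/-- First projection from the pullback. -/
def pbFst (X Y A : HAsmObj) (h : HHom X A) (g : HHom Y A) :
    HHom (pbObj X Y A h g) X := by
  refine ⟨fun p => p.1.1, ?_⟩
  obtain ⟨e, he⟩ := exists_kap_eq' ((primrec_untagL.to_comp).partrec)
  exact ⟨e, fun m hm => ⟨untagL m, by simp [he], untagL_mem_bang hm⟩,
    fun p m hm => ⟨untagL m, by simp [he], hm.2.1⟩⟩

/-- Second projection from the pullback. -/
def pbSnd (X Y A : HAsmObj) (h : HHom X A) (g : HHom Y A) :
    HHom (pbObj X Y A h g) Y := by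
  refine ⟨fun p => p.1.2, ?_⟩
  obtain ⟨e, he⟩ := exists_kap_eq' ((primrec_untagR.to_comp).partrec)
  exact ⟨e, fun m hm => ⟨untagR m, by simp [he], untagR_mem_bang hm⟩,
    fun p m hm => ⟨untagR m, by simp [he], hm.2.2⟩⟩

/-- Lift into the pullback. -/
def pbLift {W : HAsmObj} (X Y A : HAsmObj) (h : HHom X A) (g : HHom Y A)
    (u : HHom W X) (v : HHom W Y)
    (hc : ∀ w, h.toFun (u.toFun w) = g.toFun (v.toFun w)) :
    HHom W (pbObj X Y A h g) := by
  refine ⟨fun w => ⟨(u.toFun w, v.toFun w), hc w⟩, ?_⟩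
  obtain ⟨ru, hru1, hru2⟩ := u.tracked
  obtain ⟨rv, hrv1, hrv2⟩ := v.tracked
  have hmg : Computable₂ fun (p : ℕ × ℕ) (b : ℕ) => merge2 p.2 b :=
    (primrec_merge2.comp (Primrec.snd.comp Primrec.fst) Primrec.snd).to₂.to_comp
  have hp : Partrec fun m => (kap ru m).bind fun a => (kap rv m).map fun b => merge2 a b :=
    (partrec_kap ru).bind
      ((((partrec_kap rv).comp Computable.fst)).map hmg).to₂
  obtain ⟨e, he⟩ := exists_kap_eq' hp
  refine ⟨e, ?_, ?_⟩
  · intro m hm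
    obtain ⟨a, ha, ha'⟩ := hru1 m hm
    obtain ⟨b, hb, hb'⟩ := hrv1 m hm
    exact ⟨merge2 a b, by rw [he]; exact Part.mem_bind_iff.mpr ⟨a, ha, Part.mem_map _ hb⟩,
      merge2_mem_bang ha' hb'⟩
  · intro w m hm
    obtain ⟨a, ha, ha'⟩ := hru2 w m hm
    obtain ⟨b, hb, hb'⟩ := hrv2 w m hm
    refine ⟨merge2 a b, by rw [he]; exact Part.mem_bind_iff.mpr ⟨a, ha, Part.mem_map _ hb⟩,
      merge2_mem_bang (X.rz_sub _ ha') (Y.rz_sub _ hb'), ?_, ?_⟩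
    · rw [untagL_merge2]; exact ha'
    · rw [untagR_merge2]; exact hb'

open CategoryTheory.Limits in
instance hasPullbacks_HAsm : HasPullbacks HAsmObj := by
  haveI : ∀ {X Y Z : HAsmObj} {f : X ⟶ Z} {g : Y ⟶ Z}, HasLimit (cospan f g) := by
    intro X Y Z f g
    refine HasLimit.mk ⟨PullbackCone.mk (pbFst X Y Z f g) (pbSnd X Y Z f g)
      (HHom.ext' (funext fun p => p.prop)), ?_⟩
    refine PullbackCone.IsLimit.mk _
      (fun s => pbLift X Y Z f g s.fst s.snd
        (fun w => congrFun (congrArg HHom.toFun s.condition) w))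
      (fun s => HHom.ext' rfl) (fun s => HHom.ext' rfl) ?_
    intro s m h1 h2
    refine HHom.ext' (funext fun w => ?_)
    have e1 := congrFun (congrArg HHom.toFun h1) w
    have e2 := congrFun (congrArg HHom.toFun h2) w
    exact Subtype.ext (Prod.ext e1 e2)
  exact hasPullbacks_of_hasLimit_cospan HAsmObj

open CategoryTheory.Limits

/-- The concrete base change functor along `f : B ⟶ A`. -/
def pbF {A B : HAsmObj} (f : B ⟶ A) : Over A ⥤ Over B where
  obj Z := Over.mk (pbFst B Z.left A f Z.hom)
  map {Z Z'} t := Over.homMk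
    (pbLift B Z'.left A f Z'.hom (pbFst B Z.left A f Z.hom)
      (pbSnd B Z.left A f Z.hom ≫ t.left)
      (fun p => by exact p.prop.trans (congrFun (congrArg HHom.toFun (Over.w t)) p.1.2).symm))
    (HHom.ext' rfl)
  map_id Z := by
    apply Over.OverMorphism.ext; apply HHom.ext'; rfl
  map_comp t t' := by
    apply Over.OverMorphism.ext; apply HHom.ext'; rfl

/-- The concrete base change functor is right adjoint to `Over.map f`. -/
def mapPbAdj {A B : HAsmObj} (f : B ⟶ A) : Over.map f ⊣ pbF f :=
  Adjunction.mkOfHomEquiv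
    { homEquiv := fun W Z =>
        { toFun := fun u => Over.homMk
            (pbLift B Z.left A f Z.hom W.hom u.left
              (fun w => (congrFun (congrArg HHom.toFun (Over.w u)) w).symm))
            (HHom.ext' rfl)
          invFun := fun v => Over.homMk (v.left ≫ pbSnd B Z.left A f Z.hom)
            (HHom.ext' (funext fun w =>
              ((v.left.toFun w).prop).symm.trans
                (congrArg f.toFun (congrFun (congrArg HHom.toFun (Over.w v)) w))))
          left_inv := fun u => by
            apply Over.OverMorphism.ext; apply HHom.ext'; rfl
          right_inv := fun v => by
            apply Over.OverMorphism.ext; apply HHom.ext'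
            funext w
            exact Subtype.ext (Prod.ext
              (congrFun (congrArg HHom.toFun (Over.w v)) w).symm rfl)
        }
      homEquiv_naturality_left_symm := fun wmor g => by
        apply Over.OverMorphism.ext; apply HHom.ext'; rfl
      homEquiv_naturality_right := fun u zmor => by
        apply Over.OverMorphism.ext; apply HHom.ext'; rfl
    }

/-- Codes that totally map `!S` into `!T`. -/
def TSet (S T : Set ℕ) : Set ℕ := {e | ∀ k ∈ bang S, kapIn e k (bang T)}

/-- Carrier of the dependent product along `f` of `p : Y ⟶ B`. -/
structure PiCar (B A Y : HAsmObj) (f : HHom B A) (p : HHom Y B) where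
  pt : A.carrier
  sec : ∀ b : B.carrier, f.toFun b = pt → Y.carrier
  sec_over : ∀ b hb, p.toFun (sec b hb) = b
  tracked : ∃ e, e ∈ TSet B.real Y.real ∧
    ∀ b hb, ∀ k ∈ B.rz b, ∃ v ∈ kap e k, v ∈ Y.rz (sec b hb)

lemma PiCar.ext' {B A Y : HAsmObj} {f : HHom B A} {p : HHom Y B}
    {x y : PiCar B A Y f p} (h1 : x.pt = y.pt)
    (h2 : ∀ b hb hb', x.sec b hb = y.sec b hb') : x = y := by
  obtain ⟨pt1, sec1, so1, tr1⟩ := x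
  obtain ⟨pt2, sec2, so2, tr2⟩ := y
  dsimp at h1 h2
  subst h1
  have hs : sec1 = sec2 := by
    funext b hb
    exact h2 b hb hb
  subst hs
  rfl

/-- The dependent product object. -/
def piObj (B A Y : HAsmObj) (f : HHom B A) (p : HHom Y B) : HAsmObj where
  carrier := PiCar B A Y f p
  real := pairSet A.real (TSet B.real Y.real)
  rz x := {m | m ∈ bang (pairSet A.real (TSet B.real Y.real)) ∧ untagL m ∈ A.rz x.pt ∧
    ∀ b hb, ∀ k ∈ B.rz b, ∃ e ∈ toL (untagR m), ∃ v ∈ kap e k, v ∈ Y.rz (x.sec b hb)}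
  rz_sub _ := fun _ hm => hm.1
  rz_ne x := by
    obtain ⟨u, hu⟩ := A.rz_ne x.pt
    obtain ⟨e, he1, he2⟩ := x.tracked
    refine ⟨merge2 u (ofL [e]), ?_, ?_, ?_⟩
    · refine merge2_mem_bang (A.rz_sub _ hu) ?_
      intro z hz
      simp only [toL_ofL, List.mem_singleton] at hz
      subst hz
      exact he1
    · rw [untagL_merge2]; exact hu
    · intro b hb k hk
      refine ⟨e, ?_, he2 b hb k hk⟩
      rw [untagR_merge2]
      simp [toL_ofL]
  rz_up x := by
    rintro m ⟨_, hm2, hm3⟩ n hn hmn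
    refine ⟨hn, A.rz_up _ _ hm2 _ (untagL_mem_bang hn) (sle_untagL hmn), ?_⟩
    intro b hb k hk
    obtain ⟨e, he, hv⟩ := hm3 b hb k hk
    exact ⟨e, sle_untagR hmn e he, hv⟩

/-- Projection from the dependent product to the base. -/
def piProj (B A Y : HAsmObj) (f : HHom B A) (p : HHom Y B) :
    HHom (piObj B A Y f p) A := by
  refine ⟨fun x => x.pt, ?_⟩
  obtain ⟨e, he⟩ := exists_kap_eq' primrec_untagL.to_comp.partrec
  exact ⟨e, fun m hm => ⟨untagL m, by simp [he], untagL_mem_bang hm⟩,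
    fun x m hm => ⟨untagL m, by simp [he], hm.2.1⟩⟩

/-- Postcompose all code entries (odd entries) of a merged list with the code `r`. -/
def mapOdd (r m : ℕ) : ℕ :=
  ofL ((toL m).map fun x => if x % 2 = 1 then 2 * compC r (x / 2) + 1 else x)

lemma primrec_mapOdd (r : ℕ) : Primrec (mapOdd r) := by
  refine primrec_ofL.comp (Primrec.list_map primrec_toL ?_)
  have hpred : PrimrecPred fun q : ℕ × ℕ => q.2 % 2 = 1 :=
    PrimrecPred.comp (p := fun q : ℕ × ℕ => q.1 = q.2) Primrec.eq
      (Primrec.pair (Primrec.nat_mod.comp Primrec.snd (Primrec.const 2)) (Primrec.const 1))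
  exact Primrec.ite hpred
    (Primrec.succ.comp (Primrec.nat_mul.comp (Primrec.const 2)
      ((primrec_compC r).comp (Primrec.nat_div.comp Primrec.snd (Primrec.const 2)))))
    Primrec.snd

lemma untagL_mapOdd (r m : ℕ) : untagL (mapOdd r m) = untagL m := by
  unfold untagL mapOdd
  rw [toL_ofL, List.filterMap_map]
  have hfun : ((fun x => if x % 2 = 0 then some (x / 2) else none) ∘
      fun x => if x % 2 = 1 then 2 * compC r (x / 2) + 1 else x) =
      fun x => if x % 2 = 0 then some (x / 2) else none := by
    funext x
    by_cases h : x % 2 = 1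
    · have h1 : (2 * compC r (x / 2) + 1) % 2 = 1 := by omega
      simp [Function.comp, h, h1]
    · simp [Function.comp, h]
  rw [hfun]

lemma mem_untagR_mapOdd {r m x : ℕ} :
    x ∈ toL (untagR (mapOdd r m)) ↔ ∃ e ∈ toL (untagR m), x = compC r e := by
  rw [mem_toL_untagR]
  unfold mapOdd
  rw [toL_ofL, List.mem_map]
  constructor
  · rintro ⟨y, hy, hyx⟩
    by_cases h : y % 2 = 1
    · rw [if_pos h] at hyx
      refine ⟨y / 2, mem_toL_untagR.mpr ?_, by omega⟩
      have : 2 * (y / 2) + 1 = y := by omega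
      rwa [this]
    · rw [if_neg h] at hyx
      omega
  · rintro ⟨e, he, rfl⟩
    refine ⟨2 * e + 1, mem_toL_untagR.mp he, ?_⟩
    have h1 : (2 * e + 1) % 2 = 1 := by omega
    have h2 : (2 * e + 1) / 2 = e := by omega
    rw [if_pos h1, h2]

lemma compC_mem_TSet {r e : ℕ} {U V V' : Set ℕ}
    (hr : ∀ v ∈ bang V, kapIn r v (bang V')) (he : e ∈ TSet U V) :
    compC r e ∈ TSet U V' := by
  intro k hk
  obtain ⟨v, hv, hv'⟩ := he k hk
  obtain ⟨w, hw, hw'⟩ := hr v hv'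
  exact ⟨w, by rw [kap_compC]; exact Part.mem_bind_iff.mpr ⟨v, hv, hw⟩, hw'⟩

lemma mapOdd_mem_bang {r m : ℕ} {S U V V' : Set ℕ}
    (hr : ∀ v ∈ bang V, kapIn r v (bang V'))
    (hm : m ∈ bang (pairSet S (TSet U V))) :
    mapOdd r m ∈ bang (pairSet S (TSet U V')) := by
  intro z hz
  unfold mapOdd at hz
  rw [toL_ofL, List.mem_map] at hz
  obtain ⟨y, hy, rfl⟩ := hz
  by_cases h : y % 2 = 1
  · rw [if_pos h]
    have hyT : y / 2 ∈ TSet U V := by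
      rcases hm y hy with ⟨h0, _⟩ | ⟨_, hT⟩
      · omega
      · exact hT
    refine Or.inr ⟨by omega, ?_⟩
    have : (2 * compC r (y / 2) + 1) / 2 = compC r (y / 2) := by omega
    rw [this]
    exact compC_mem_TSet hr hyT
  · rw [if_neg h]
    rcases hm y hy with ⟨h0, hS⟩ | ⟨h1, _⟩
    · exact Or.inl ⟨h0, hS⟩
    · omega

/-- Functorial action on dependent products. -/
def piMapHom {A B : HAsmObj} (f : B ⟶ A) {Y Y' : Over B} (t : Y ⟶ Y') :
    HHom (piObj B A Y.left f Y.hom) (piObj B A Y'.left f Y'.hom) := by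
  refine ⟨fun x =>
    { pt := x.pt
      sec := fun b hb => t.left.toFun (x.sec b hb)
      sec_over := fun b hb => by
        exact (congrFun (congrArg HHom.toFun (Over.w t)) (x.sec b hb)).trans
          (x.sec_over b hb)
      tracked := ?_ }, ?_⟩
  · obtain ⟨rt, hrt1, hrt2⟩ := t.left.tracked
    obtain ⟨e, he1, he2⟩ := x.tracked
    refine ⟨compC rt e, compC_mem_TSet hrt1 he1, fun b hb k hk => ?_⟩
    obtain ⟨v, hv, hv'⟩ := he2 b hb k hk
    obtain ⟨w, hw, hw'⟩ := hrt2 _ v hv'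
    exact ⟨w, by rw [kap_compC]; exact Part.mem_bind_iff.mpr ⟨v, hv, hw⟩, hw'⟩
  · obtain ⟨rt, hrt1, hrt2⟩ := t.left.tracked
    obtain ⟨c, hc⟩ := exists_kap_eq' (primrec_mapOdd rt).to_comp.partrec
    refine ⟨c, ?_, ?_⟩
    · intro m hm
      exact ⟨mapOdd rt m, by simp [hc], mapOdd_mem_bang hrt1 hm⟩
    · intro x m hm
      refine ⟨mapOdd rt m, by simp [hc], mapOdd_mem_bang hrt1 hm.1, ?_, ?_⟩
      · rw [untagL_mapOdd]; exact hm.2.1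
      · intro b hb k hk
        obtain ⟨e, he, v, hv, hv'⟩ := hm.2.2 b hb k hk
        obtain ⟨w, hw, hw'⟩ := hrt2 _ v hv'
        exact ⟨compC rt e, mem_untagR_mapOdd.mpr ⟨e, he, rfl⟩,
          w, by rw [kap_compC]; exact Part.mem_bind_iff.mpr ⟨v, hv, hw⟩, hw'⟩

/-- The dependent product functor along `f : B ⟶ A`. -/
def piF {A B : HAsmObj} (f : B ⟶ A) : Over B ⥤ Over A where
  obj Y := Over.mk (piProj B A Y.left f Y.hom)
  map {Y Y'} t := Over.homMk (piMapHom f t) (HHom.ext' rfl)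
  map_id Y := by
    apply Over.OverMorphism.ext; apply HHom.ext'
    funext x
    exact PiCar.ext' rfl fun b hb hb' => rfl
  map_comp t t' := by
    apply Over.OverMorphism.ext; apply HHom.ext'
    funext x
    exact PiCar.ext' rfl fun b hb hb' => rfl

/-- s-m-n style code specialization on numerals. -/
def sCode (c : Code) (m : ℕ) : ℕ := encode (curry c m)

lemma kap_sCode (c : Code) (m k : ℕ) : kap (sCode c m) k = eval c (Nat.pair m k) := by
  simp [kap, sCode, Denumerable.ofNat_encode, eval_curry]

lemma primrec_sCode (c : Code) : Primrec (sCode c) :=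
  Primrec.encode.comp (primrec₂_curry.comp (Primrec.const c) Primrec.id)

lemma secCodeEx (rv : ℕ) :
    ∃ c : Code, ∀ q, eval c q = kap rv (merge2 q.unpair.2 q.unpair.1) := by
  obtain ⟨c, hc⟩ := Nat.Partrec.Code.exists_code.mp (Partrec.nat_iff.mp
    ((partrec_kap rv).comp ((primrec_merge2.comp
      (Primrec.snd.comp Primrec.unpair) (Primrec.fst.comp Primrec.unpair)).to_comp)))
  exact ⟨c, fun q => congrFun hc q⟩

/-- A code computing `k ↦ rv · (merge2 k m)`, uniformly in a parameter. -/
noncomputable def secCode (rv : ℕ) : Code := (secCodeEx rv).choose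

lemma kap_sCode_secCode (rv m k : ℕ) :
    kap (sCode (secCode rv) m) k = kap rv (merge2 k m) := by
  rw [kap_sCode]
  have h := (secCodeEx rv).choose_spec (Nat.pair m k)
  simp only [Nat.unpair_pair] at h
  exact h

/-- Transpose of a morphism `f*Z ⟶ Y` over `B` to a morphism `Z ⟶ Π_f Y`. -/
def fwdHom {A B : HAsmObj} (f : B ⟶ A) (Z : Over A) (Y : Over B)
    (v : (pbF f).obj Z ⟶ Y) : HHom Z.left (piObj B A Y.left f Y.hom) := by
  refine ⟨fun z =>
    { pt := Z.hom.toFun z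
      sec := fun b hb => v.left.toFun ⟨(b, z), hb⟩
      sec_over := fun b hb => congrFun (congrArg HHom.toFun (Over.w v)) ⟨(b, z), hb⟩
      tracked := ?_ }, ?_⟩
  · obtain ⟨rv, hrv1, hrv2⟩ := v.left.tracked
    obtain ⟨mz, hmz⟩ := Z.left.rz_ne z
    refine ⟨sCode (secCode rv) mz, ?_, ?_⟩
    · intro k hk
      obtain ⟨w, hw, hw'⟩ := hrv1 (merge2 k mz) (merge2_mem_bang hk (Z.left.rz_sub _ hmz))
      exact ⟨w, by rw [kap_sCode_secCode]; exact hw, hw'⟩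
    · intro b hb k hk
      have hmem : merge2 k mz ∈ (pbObj B Z.left A f Z.hom).rz ⟨(b, z), hb⟩ :=
        ⟨merge2_mem_bang (B.rz_sub _ hk) (Z.left.rz_sub _ hmz),
          by rw [untagL_merge2]; exact hk, by rw [untagR_merge2]; exact hmz⟩
      obtain ⟨w, hw, hw'⟩ := hrv2 _ _ hmem
      exact ⟨w, by rw [kap_sCode_secCode]; exact hw, hw'⟩
  · obtain ⟨rv, hrv1, hrv2⟩ := v.left.tracked
    obtain ⟨rg, hrg1, hrg2⟩ := Z.hom.tracked
    have hsing : Primrec fun m : ℕ => ofL [sCode (secCode rv) m] :=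
      primrec_ofL.comp (Primrec.list_cons.comp ((primrec_sCode (secCode rv)))
        (Primrec.const []))
    have hp : Partrec fun m => (kap rg m).map fun u => merge2 u (ofL [sCode (secCode rv) m]) :=
      (partrec_kap rg).map
        ((primrec_merge2.comp Primrec.snd (hsing.comp Primrec.fst)).to₂.to_comp)
    obtain ⟨c, hc⟩ := exists_kap_eq' hp
    refine ⟨c, ?_, ?_⟩
    · intro m hm
      obtain ⟨u, hu, hu'⟩ := hrg1 m hm
      refine ⟨merge2 u (ofL [sCode (secCode rv) m]),
        by rw [hc]; exact Part.mem_map _ hu, merge2_mem_bang hu' ?_⟩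
      intro e he
      simp only [toL_ofL, List.mem_singleton] at he
      subst he
      intro k hk
      obtain ⟨w, hw, hw'⟩ := hrv1 (merge2 k m) (merge2_mem_bang hk hm)
      exact ⟨w, by rw [kap_sCode_secCode]; exact hw, hw'⟩
    · intro z m hm
      obtain ⟨u, hu, hu'⟩ := hrg2 z m hm
      refine ⟨merge2 u (ofL [sCode (secCode rv) m]),
        by rw [hc]; exact Part.mem_map _ hu, merge2_mem_bang (A.rz_sub _ hu') ?_, ?_, ?_⟩
      · intro e he
        simp only [toL_ofL, List.mem_singleton] at he
        subst he
        intro k hk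
        obtain ⟨w, hw, hw'⟩ := hrv1 (merge2 k m) (merge2_mem_bang hk (Z.left.rz_sub _ hm))
        exact ⟨w, by rw [kap_sCode_secCode]; exact hw, hw'⟩
      · rw [untagL_merge2]; exact hu'
      · intro b hb k hk
        refine ⟨sCode (secCode rv) m, by rw [untagR_merge2]; simp [toL_ofL], ?_⟩
        have hmem : merge2 k m ∈ (pbObj B Z.left A f Z.hom).rz ⟨(b, z), hb⟩ :=
          ⟨merge2_mem_bang (B.rz_sub _ hk) (Z.left.rz_sub _ hm),
            by rw [untagL_merge2]; exact hk, by rw [untagR_merge2]; exact hm⟩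
        obtain ⟨w, hw, hw'⟩ := hrv2 _ _ hmem
        exact ⟨w, by rw [kap_sCode_secCode]; exact hw, hw'⟩

/-- Transpose of a morphism `Z ⟶ Π_f Y` over `A` to a morphism `f*Z ⟶ Y`. -/
def bwdHom {A B : HAsmObj} (f : B ⟶ A) (Z : Over A) (Y : Over B)
    (u : Z ⟶ (piF f).obj Y) : HHom (pbObj B Z.left A f Z.hom) Y.left := by
  refine ⟨fun q => (u.left.toFun q.1.2).sec q.1.1
    (by exact q.prop.trans (congrFun (congrArg HHom.toFun (Over.w u)) q.1.2).symm), ?_⟩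
  obtain ⟨ru, hru1, hru2⟩ := u.left.tracked
  have hcomb : Computable fun pr : ℕ × ℕ => Nat.pair (untagR pr.2) (untagL pr.1) :=
    (Primrec₂.natPair.comp (primrec_untagR.comp Primrec.snd)
      (primrec_untagL.comp Primrec.fst)).to_comp
  have hp : Partrec fun m => (kap ru (untagR m)).bind fun w =>
      evalAll (Nat.pair (untagR w) (untagL m)) :=
    ((partrec_kap ru).comp primrec_untagR.to_comp).bind
      (partrec_evalAll.comp hcomb)
  obtain ⟨c, hc⟩ := exists_kap_eq' hp
  refine ⟨c, ?_, ?_⟩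
  · intro m hm
    obtain ⟨w, hw, hw'⟩ := hru1 (untagR m) (untagR_mem_bang hm)
    have hTall : ∀ e ∈ toL (untagR w), e ∈ TSet B.real Y.left.real :=
      fun e he => untagR_mem_bang hw' e he
    have hkL : untagL m ∈ bang B.real := untagL_mem_bang hm
    have hdom : ∀ e ∈ toL (untagR w), (kap e (untagL m)).Dom := by
      intro e he
      obtain ⟨v, hv, _⟩ := hTall e he (untagL m) hkL
      exact Part.dom_iff_mem.mpr ⟨v, hv⟩
    obtain ⟨res, hres, hsle, hcov⟩ := evalAll_spec hdom
    refine ⟨res, by rw [hc]; exact Part.mem_bind_iff.mpr ⟨w, hw, hres⟩, ?_⟩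
    intro x hx
    obtain ⟨e, he, v, hv, hxv⟩ := hcov x hx
    obtain ⟨v', hv', hv'b⟩ := hTall e he (untagL m) hkL
    have hvv : v = v' := Part.mem_unique hv hv'
    subst hvv
    exact hv'b x hxv
  · intro q m hm
    obtain ⟨w, hw, hwrz⟩ := hru2 q.1.2 (untagR m) hm.2.2
    obtain ⟨hwb, hwL, hwsec⟩ := hwrz
    have hTall : ∀ e ∈ toL (untagR w), e ∈ TSet B.real Y.left.real :=
      fun e he => untagR_mem_bang hwb e he
    have hkrz : untagL m ∈ B.rz q.1.1 := hm.2.1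
    have hkL : untagL m ∈ bang B.real := B.rz_sub _ hkrz
    have hdom : ∀ e ∈ toL (untagR w), (kap e (untagL m)).Dom := by
      intro e he
      obtain ⟨v, hv, _⟩ := hTall e he (untagL m) hkL
      exact Part.dom_iff_mem.mpr ⟨v, hv⟩
    obtain ⟨res, hres, hsle, hcov⟩ := evalAll_spec hdom
    have hresb : res ∈ bang Y.left.real := by
      intro x hx
      obtain ⟨e, he, v, hv, hxv⟩ := hcov x hx
      obtain ⟨v', hv', hv'b⟩ := hTall e he (untagL m) hkL
      have hvv : v = v' := Part.mem_unique hv hv'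
      subst hvv
      exact hv'b x hxv
    have hb : f.toFun q.1.1 = (u.left.toFun q.1.2).pt := by
      exact q.prop.trans (congrFun (congrArg HHom.toFun (Over.w u)) q.1.2).symm
    obtain ⟨e₀, he₀, v₀, hv₀, hv₀rz⟩ := hwsec q.1.1 hb (untagL m) hkrz
    refine ⟨res, by rw [hc]; exact Part.mem_bind_iff.mpr ⟨w, hw, hres⟩, ?_⟩
    exact Y.left.rz_up _ v₀ hv₀rz res hresb (hsle e₀ he₀ v₀ hv₀)

/-- The adjunction between base change and dependent product. -/
def pbPiAdj {A B : HAsmObj} (f : B ⟶ A) : pbF f ⊣ piF f :=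
  Adjunction.mkOfHomEquiv
    { homEquiv := fun Z Y =>
        { toFun := fun v => Over.homMk (fwdHom f Z Y v) (HHom.ext' rfl)
          invFun := fun u => Over.homMk (bwdHom f Z Y u)
            (HHom.ext' (funext fun q => (u.left.toFun q.1.2).sec_over q.1.1 _))
          left_inv := fun v => by
            apply Over.OverMorphism.ext; apply HHom.ext'; rfl
          right_inv := fun u => by
            apply Over.OverMorphism.ext; apply HHom.ext'
            funext z
            refine PiCar.ext' ?_ fun b hb hb' => rfl
            exact (congrFun (congrArg HHom.toFun (Over.w u)) z).symm }
      homEquiv_naturality_left_symm := fun zmor g => by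
        apply Over.OverMorphism.ext; apply HHom.ext'; rfl
      homEquiv_naturality_right := fun v ymor => by
        apply Over.OverMorphism.ext; apply HHom.ext'
        funext z
        exact PiCar.ext' rfl fun b hb hb' => rfl }

end LCC

open CategoryTheory.Limits in
/-- `HAsm` is locally cartesian closed: it has pullbacks, and for every
`f : B ⟶ A` the base change functor `f* : HAsm/A ⥤ HAsm/B` (i.e. any right adjoint of
`Over.map f`) has a right adjoint `Π_f`. -/
theorem hasm_locally_cartesian_closed :
    HasPullbacks HAsmObj ∧
    ∀ (A B : HAsmObj) (f : B ⟶ A) (F : Over A ⥤ Over B)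
      (_ : CategoryTheory.Over.map f ⊣ F), F.IsLeftAdjoint := by
  refine ⟨hasPullbacks_HAsm, ?_⟩
  intro A B f F adj
  exact ⟨⟨piF f, ⟨(pbPiAdj f).ofNatIsoLeft (Adjunction.rightAdjointUniq (mapPbAdj f) adj)⟩⟩⟩

end Herbrand
end

section
/- Let T be a decidable set of finite sequences of natural numbers that contains the empty sequence and is closed under taking prefixes, and suppose there is a computable function b : List ℕ → ℕ such that for all l ∈ T and all x ∈ ℕ, if l ++ [x] ∈ T then x ≤ b l. Then there is a computable function h : ℕ → ℕ such that every infinite path α through T satisfies α n ≤ h n for all n ∈ ℕ. -/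
open Encodable

private lemma treePairMono {a a' b b' : ℕ} (ha : a ≤ a') (hb : b ≤ b') :
    Nat.pair a b ≤ Nat.pair a' b' := by
  unfold Nat.pair
  split_ifs with h1 h2 h2 <;> (try push_neg at *) <;> nlinarith [Nat.mul_le_mul ha ha, Nat.mul_le_mul hb hb]

private lemma treeEncodeMono : ∀ {l l' : List ℕ}, List.Forall₂ (· ≤ ·) l l' →
    encode l ≤ encode l'
  | _, _, List.Forall₂.nil => le_rfl
  | _, _, List.Forall₂.cons h₁ h₂ => by
      simp only [encode_list_cons, encode_nat]
      exact Nat.succ_le_succ (treePairMono h₁ (treeEncodeMono h₂))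

private def treeG (c : List ℕ → Bool) (b : List ℕ → ℕ) (p : ℕ × ℕ) : ℕ :=
  Option.casesOn (decode p.2 : Option (List ℕ)) 0 fun l =>
    cond (decide (l.length = p.1)) (cond (c l) (b l) 0) 0

private def treeF (c : List ℕ → Bool) (b : List ℕ → ℕ) (p : ℕ × ℕ) : ℕ :=
  Nat.rec (treeG c b (p.1, 0)) (fun k acc => max acc (treeG c b (p.1, k + 1))) p.2

private def treeS (c : List ℕ → Bool) (b : List ℕ → ℕ) : ℕ → List ℕ :=
  fun n => Nat.rec [] (fun k IH => IH ++ [treeF c b (k, encode IH)]) n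

private def treeH (c : List ℕ → Bool) (b : List ℕ → ℕ) (n : ℕ) : ℕ :=
  treeF c b (n, encode (treeS c b n))

private lemma comp_treeG {c : List ℕ → Bool} {b : List ℕ → ℕ}
    (hc : Computable c) (hb : Computable b) : Computable (treeG c b) := by
  have hdec : Computable fun p : ℕ × ℕ => (decode p.2 : Option (List ℕ)) :=
    Computable.decode.comp Computable.snd
  have heq : Computable fun q : (ℕ × ℕ) × List ℕ => decide (q.2.length = q.1.1) :=
    (Primrec.eq.decide.to_comp).comp (Computable.list_length.comp Computable.snd)
      (Computable.fst.comp Computable.fst)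
  have hinner : Computable fun q : (ℕ × ℕ) × List ℕ => cond (c q.2) (b q.2) 0 :=
    Computable.cond (hc.comp Computable.snd) (hb.comp Computable.snd) (Computable.const 0)
  exact Computable.option_casesOn hdec (Computable.const 0)
    (Computable.cond heq hinner (Computable.const 0)).to₂

private lemma comp_treeF {c : List ℕ → Bool} {b : List ℕ → ℕ}
    (hc : Computable c) (hb : Computable b) : Computable (treeF c b) := by
  have hstep : Computable₂ fun (a : ℕ × ℕ) (q : ℕ × ℕ) =>
      max q.2 (treeG c b (a.1, q.1 + 1)) :=
    Primrec.nat_max.to_comp.comp₂ (Computable.snd.comp Computable.snd).to₂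
      (((comp_treeG hc hb).comp
        (((Computable.fst.comp Computable.fst).pair
          (Computable.succ.comp (Computable.fst.comp Computable.snd))))).to₂)
  have := Computable.nat_rec Computable.snd
    ((comp_treeG hc hb).comp (Computable.fst.pair (Computable.const 0))) hstep
  exact this.of_eq fun p => rfl

private lemma comp_treeS {c : List ℕ → Bool} {b : List ℕ → ℕ}
    (hc : Computable c) (hb : Computable b) : Computable (treeS c b) := by
  have hstep : Computable₂ fun (a : ℕ) (q : ℕ × List ℕ) =>
      q.2 ++ [treeF c b (q.1, encode q.2)] :=
    Computable.list_concat.comp₂ (Computable.snd.comp Computable.snd).to₂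
      (((comp_treeF hc hb).comp ((Computable.fst.comp Computable.snd).pair
        (Computable.encode.comp (Computable.snd.comp Computable.snd)))).to₂)
  have := Computable.nat_rec Computable.id (Computable.const ([] : List ℕ)) hstep
  exact this.of_eq fun n => rfl

private lemma comp_treeH {c : List ℕ → Bool} {b : List ℕ → ℕ}
    (hc : Computable c) (hb : Computable b) : Computable (treeH c b) :=
  (comp_treeF hc hb).comp (Computable.id.pair (Computable.encode.comp (comp_treeS hc hb)))

private lemma treeG_le_treeF (c : List ℕ → Bool) (b : List ℕ → ℕ) (n : ℕ) :
    ∀ {N e : ℕ}, e ≤ N → treeG c b (n, e) ≤ treeF c b (n, N) := by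
  intro N
  induction N with
  | zero => intro e he; simp_all [treeF]
  | succ N ih =>
      intro e he
      rcases Nat.lt_succ_iff_lt_or_eq.mp (Nat.lt_succ_of_le he) with h | h
      · exact le_trans (ih (Nat.lt_succ_iff.mp h)) (le_max_left _ _)
      · subst h; exact le_max_right _ _

private lemma treeG_encode (c : List ℕ → Bool) (b : List ℕ → ℕ) (l : List ℕ)
    (hc : c l = true) : treeG c b (l.length, encode l) = b l := by
  simp [treeG, encodek, hc]

/-- if `T` is a decidable tree (containing the empty sequence and closed
under prefixes) whose branching is bounded by a computable function `b`, then there is a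
computable function `h` bounding every infinite path of `T` pointwise. -/
theorem computable_bound_of_computably_bounded_tree
    (T : Set (List ℕ)) (hdec : ComputablePred (· ∈ T))
    (hroot : [] ∈ T) (hpre : ∀ l ∈ T, ∀ l' : List ℕ, l' <+: l → l' ∈ T)
    (b : List ℕ → ℕ) (hb : Computable b)
    (hbd : ∀ l ∈ T, ∀ x : ℕ, l ++ [x] ∈ T → x ≤ b l) :
    ∃ h : ℕ → ℕ, Computable h ∧
      ∀ α : ℕ → ℕ, (∀ n : ℕ, (List.range n).map α ∈ T) → ∀ n : ℕ, α n ≤ h n := by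
  obtain ⟨inst, hcc⟩ := hdec
  set c : List ℕ → Bool := fun l => @decide (l ∈ T) (inst l) with hcdef
  have hcT : ∀ l : List ℕ, l ∈ T → c l = true := fun l hl => decide_eq_true hl
  -- main invariant
  have key : ∀ n : ℕ, (treeS c b n).length = n ∧
      ∀ l ∈ T, l.length = n → List.Forall₂ (· ≤ ·) l (treeS c b n) := by
    intro n
    induction n with
    | zero =>
        refine ⟨rfl, fun l _ hl => ?_⟩
        rw [List.length_eq_zero_iff] at hl; subst hl; exact List.Forall₂.nil
    | succ n ih =>
        obtain ⟨hlen, hball⟩ := ih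
        have hS : treeS c b (n + 1) = treeS c b n ++ [treeH c b n] := rfl
        constructor
        · simp [hS, hlen]
        · intro l hlT hllen
          have hne : l ≠ [] := by intro h; subst h; simp at hllen
          have hdl : l.dropLast ++ [l.getLast hne] = l := List.dropLast_concat_getLast hne
          have hdT : l.dropLast ∈ T := hpre l hlT _ ⟨[l.getLast hne], hdl⟩
          have hdlen : l.dropLast.length = n := by
            simp [List.length_dropLast, hllen]
          have hF2 : List.Forall₂ (· ≤ ·) l.dropLast (treeS c b n) := hball _ hdT hdlen
          have hble : b l.dropLast ≤ treeH c b n := by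
            have h1 : treeG c b (n, encode l.dropLast) = b l.dropLast := by
              have := treeG_encode c b l.dropLast (hcT _ hdT)
              rwa [hdlen] at this
            have h2 : encode l.dropLast ≤ encode (treeS c b n) := treeEncodeMono hF2
            calc b l.dropLast = treeG c b (n, encode l.dropLast) := h1.symm
              _ ≤ treeF c b (n, encode (treeS c b n)) := treeG_le_treeF c b n h2
              _ = treeH c b n := rfl
          have hx : l.getLast hne ≤ treeH c b n := by
            have := hbd l.dropLast hdT (l.getLast hne) (by rwa [hdl])
            exact this.trans hble
          rw [hS, ← hdl]
          exact List.rel_append hF2 (List.Forall₂.cons hx List.Forall₂.nil)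
  refine ⟨treeH c b, comp_treeH hcc hb, ?_⟩
  intro α hα n
  have hln : (List.range n).map α ∈ T := hα n
  have hlsn : (List.range (n + 1)).map α ∈ T := hα (n + 1)
  have happ : (List.range (n + 1)).map α = (List.range n).map α ++ [α n] := by
    rw [List.range_succ, List.map_append, List.map_singleton]
  have hxb : α n ≤ b ((List.range n).map α) :=
    hbd _ hln (α n) (by rwa [← happ])
  refine hxb.trans ?_
  have hlen : ((List.range n).map α).length = n := by simp
  have hF2 : List.Forall₂ (· ≤ ·) ((List.range n).map α) (treeS c b n) :=
    (key n).2 _ hln hlen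
  have h1 : treeG c b (n, encode ((List.range n).map α)) = b ((List.range n).map α) := by
    have := treeG_encode c b _ (hcT _ hln)
    rwa [hlen] at this
  calc b ((List.range n).map α)
      = treeG c b (n, encode ((List.range n).map α)) := h1.symm
    _ ≤ treeF c b (n, encode (treeS c b n)) := treeG_le_treeF c b n (treeEncodeMono hF2)
    _ = treeH c b n := rfl
end
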